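/- For any positive definite d×d matrices A, B with A, B ⪰ λI (λ > 0), ‖A^{-1/2} − B^{-1/2}‖ ≤ λ^{-3/2} ‖A − B‖. -/

import Mathlib

open Matrix
open scoped Matrix.Norms.L2Operator

/-- The operator (spectral) norm of a real matrix, viewed as a linear map on Euclidean space. -/
noncomputable def opNorm {d : ℕ} (A : Matrix (Fin d) (Fin d) ℝ) : ℝ :=
  ‖Matrix.toEuclideanCLM (𝕜 := ℝ) A‖

section

open scoped ComplexOrder

/-- The square root of a positive semidefinite matrix, as `Matrix.PosSemidef.sqrt` was defined
in Mathlib (December 2024); it has since been removed from Mathlib. -/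
noncomputable def Matrix.PosSemidef.sqrt {n : Type*} [Fintype n] [DecidableEq n] {𝕜 : Type*}
    [RCLike 𝕜] {A : Matrix n n 𝕜} (hA : A.PosSemidef) : Matrix n n 𝕜 :=
  hA.1.eigenvectorUnitary.1 * Matrix.diagonal ((↑) ∘ (Real.sqrt ∘ hA.1.eigenvalues)) *
    (star hA.1.eigenvectorUnitary : Matrix n n 𝕜)

end

namespace Stmt8Aux

variable {d : ℕ}

lemma psd_sqrt_mul_self {A : Matrix (Fin d) (Fin d) ℝ} (hA : A.PosSemidef) :
    hA.sqrt * hA.sqrt = A := by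
  have hUU : (star hA.1.eigenvectorUnitary : Matrix (Fin d) (Fin d) ℝ) *
      (hA.1.eigenvectorUnitary : Matrix (Fin d) (Fin d) ℝ) = 1 := Unitary.coe_star_mul_self _
  conv_rhs => rw [hA.1.spectral_theorem, Unitary.conjStarAlgAut_apply]
  unfold Matrix.PosSemidef.sqrt
  simp only [Matrix.mul_assoc]
  rw [← Matrix.mul_assoc (star _ : Matrix (Fin d) (Fin d) ℝ) _ _, hUU, Matrix.one_mul,
    ← Matrix.mul_assoc (diagonal _) (diagonal _), diagonal_mul_diagonal]
  congr 3
  funext i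
  simp [Real.mul_self_sqrt (hA.eigenvalues_nonneg i)]

lemma psd_posSemidef_sqrt {A : Matrix (Fin d) (Fin d) ℝ} (hA : A.PosSemidef) :
    hA.sqrt.PosSemidef := by
  unfold Matrix.PosSemidef.sqrt
  have hdiag : (diagonal ((↑) ∘ (Real.sqrt ∘ hA.1.eigenvalues)) :
      Matrix (Fin d) (Fin d) ℝ).PosSemidef :=
    PosSemidef.diagonal fun i => by simp [Real.sqrt_nonneg]
  have := hdiag.mul_mul_conjTranspose_same (hA.1.eigenvectorUnitary : Matrix (Fin d) (Fin d) ℝ)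
  rwa [← Matrix.star_eq_conjTranspose] at this

lemma opNorm_eq (M : Matrix (Fin d) (Fin d) ℝ) : opNorm M = ‖M‖ := rfl

lemma opNorm_nonneg (M : Matrix (Fin d) (Fin d) ℝ) : 0 ≤ opNorm M := norm_nonneg _

lemma opNorm_sub_rev (M N : Matrix (Fin d) (Fin d) ℝ) : opNorm (M - N) = opNorm (N - M) := by
  rw [opNorm_eq, opNorm_eq, norm_sub_rev]

lemma opNorm_mul_le (M N : Matrix (Fin d) (Fin d) ℝ) :
    opNorm (M * N) ≤ opNorm M * opNorm N := Matrix.l2_opNorm_mul M N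

lemma clm_apply (M : Matrix (Fin d) (Fin d) ℝ) (v : EuclideanSpace ℝ (Fin d)) :
    ⇑(Matrix.toEuclideanCLM (𝕜 := ℝ) M v) = M *ᵥ ⇑v := rfl

lemma inner_eq_dot (x y : EuclideanSpace ℝ (Fin d)) : (inner ℝ x y : ℝ) = ⇑x ⬝ᵥ ⇑y := by
  simp [PiLp.inner_apply, dotProduct, mul_comm]

lemma norm_sq_eq_dot (x : EuclideanSpace ℝ (Fin d)) : ‖x‖ ^ 2 = ⇑x ⬝ᵥ ⇑x := by
  rw [← real_inner_self_eq_norm_sq, inner_eq_dot]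

lemma opNorm_le (M : Matrix (Fin d) (Fin d) ℝ) {c : ℝ} (hc : 0 ≤ c)
    (h : ∀ v : EuclideanSpace ℝ (Fin d), ‖Matrix.toEuclideanCLM (𝕜 := ℝ) M v‖ ≤ c * ‖v‖) :
    opNorm M ≤ c :=
  ContinuousLinearMap.opNorm_le_bound _ hc h

/-- A symmetric matrix moves across the dot product. -/
lemma dot_symm_mulVec {X : Matrix (Fin d) (Fin d) ℝ} (hX : X.IsHermitian)
    (v w : Fin d → ℝ) : v ⬝ᵥ (X *ᵥ w) = (X *ᵥ v) ⬝ᵥ w := by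
  have hXt : Xᵀ = X := by
    rw [← conjTranspose_eq_transpose_of_trivial]; exact hX
  rw [dotProduct_mulVec, ← vecMul_transpose, hXt]

lemma sqrt_det_isUnit {A : Matrix (Fin d) (Fin d) ℝ} (hA : A.PosDef) :
    IsUnit hA.posSemidef.sqrt.det := by
  have h : hA.posSemidef.sqrt.det * hA.posSemidef.sqrt.det = A.det := by
    rw [← Matrix.det_mul, psd_sqrt_mul_self hA.posSemidef]
  have hd := hA.det_pos
  refine isUnit_iff_ne_zero.mpr fun h0 => ?_
  rw [h0, mul_zero] at h
  rw [← h] at hd; exact lt_irrefl 0 hd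

/-- `‖A^{-1/2}‖ ≤ λ^{-1/2}` when `A ⪰ λ I`. -/
lemma opNorm_inv_sqrt_le {A : Matrix (Fin d) (Fin d) ℝ} (hA : A.PosDef) {lam : ℝ}
    (hlam : 0 < lam) (hAl : (A - lam • 1).PosSemidef) :
    opNorm (hA.posSemidef.sqrt)⁻¹ ≤ (Real.sqrt lam)⁻¹ := by
  have hμ : 0 < Real.sqrt lam := Real.sqrt_pos.mpr hlam
  apply opNorm_le _ (by positivity)
  intro v
  set X := hA.posSemidef.sqrt with hXdef
  set w : EuclideanSpace ℝ (Fin d) := Matrix.toEuclideanCLM (𝕜 := ℝ) X⁻¹ v with hw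
  have hXw : Matrix.toEuclideanCLM (𝕜 := ℝ) X w = v := by
    have := congrArg (fun M => Matrix.toEuclideanCLM (𝕜 := ℝ) M v)
      (Matrix.mul_nonsing_inv X (sqrt_det_isUnit hA))
    simpa [_root_.map_mul, ContinuousLinearMap.mul_apply, hw] using this
  have key : lam * (⇑w ⬝ᵥ ⇑w) ≤ (X *ᵥ ⇑w) ⬝ᵥ (X *ᵥ ⇑w) := by
    have h2 := hAl.dotProduct_mulVec_nonneg ⇑w
    have hXX : X * X = A := psd_sqrt_mul_self hA.posSemidef
    have hAw : ⇑w ⬝ᵥ (A *ᵥ ⇑w) = (X *ᵥ ⇑w) ⬝ᵥ (X *ᵥ ⇑w) := by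
      rw [← hXX, ← Matrix.mulVec_mulVec, dot_symm_mulVec (psd_posSemidef_sqrt hA.posSemidef).1]
    rw [star_trivial, Matrix.sub_mulVec, dotProduct_sub, Matrix.smul_mulVec,
      Matrix.one_mulVec, dotProduct_smul, smul_eq_mul, sub_nonneg, hAw] at h2
    linarith
  have hnv : Real.sqrt lam * ‖w‖ ≤ ‖v‖ := by
    have h3 : (Real.sqrt lam * ‖w‖) ^ 2 ≤ ‖v‖ ^ 2 := by
      rw [mul_pow, Real.sq_sqrt hlam.le, norm_sq_eq_dot, norm_sq_eq_dot, ← hXw, clm_apply]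
      exact key
    have := Real.sqrt_le_sqrt h3
    rwa [Real.sqrt_sq (by positivity), Real.sqrt_sq (norm_nonneg _)] at this
  rw [inv_mul_eq_div, le_div_iff₀ hμ]
  linarith

lemma eigenvalues_ge {A : Matrix (Fin d) (Fin d) ℝ} (hA : A.IsHermitian) {lam : ℝ}
    (hAl : (A - lam • 1).PosSemidef) (i : Fin d) : lam ≤ hA.eigenvalues i := by
  have h := hAl.dotProduct_mulVec_nonneg ⇑(hA.eigenvectorBasis i)
  have hunit : ⇑(hA.eigenvectorBasis i) ⬝ᵥ ⇑(hA.eigenvectorBasis i) = 1 := by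
    rw [← norm_sq_eq_dot, hA.eigenvectorBasis.orthonormal.1 i, one_pow]
  rw [star_trivial, Matrix.sub_mulVec, Matrix.smul_mulVec, Matrix.one_mulVec,
    hA.mulVec_eigenvectorBasis, dotProduct_sub, dotProduct_smul, dotProduct_smul,
    smul_eq_mul, smul_eq_mul, hunit, mul_one, mul_one, sub_nonneg] at h
  exact h

/-- `A ⪰ λ I` implies `√A ⪰ √λ I`. -/
lemma sqrt_loewner {A : Matrix (Fin d) (Fin d) ℝ} (hA : A.PosDef) {lam : ℝ}
    (hAl : (A - lam • 1).PosSemidef) :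
    (hA.posSemidef.sqrt - Real.sqrt lam • 1).PosSemidef := by
  set hA' := hA.posSemidef with hA'def
  set U : Matrix (Fin d) (Fin d) ℝ := ↑(hA'.1.eigenvectorUnitary) with hU
  have hUU : U * star U = 1 := Unitary.coe_mul_star_self _
  have hs : hA'.sqrt = U * Matrix.diagonal (fun i => Real.sqrt (hA'.1.eigenvalues i)) * star U :=
    rfl
  have hkey : hA'.sqrt - Real.sqrt lam • 1
      = U * Matrix.diagonal (fun i => Real.sqrt (hA'.1.eigenvalues i) - Real.sqrt lam) * star U := by
    rw [← diagonal_sub (fun i => Real.sqrt (hA'.1.eigenvalues i)) (fun _ => Real.sqrt lam),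
      ← smul_one_eq_diagonal, hs, Matrix.mul_sub, Matrix.sub_mul, Matrix.mul_smul, Matrix.mul_one,
      Matrix.smul_mul, hUU]
  rw [hkey]
  have hdiag : (Matrix.diagonal
      (fun i => Real.sqrt (hA'.1.eigenvalues i) - Real.sqrt lam)).PosSemidef := by
    refine posSemidef_diagonal_iff.mpr fun i => ?_
    exact sub_nonneg.mpr (Real.sqrt_le_sqrt (eigenvalues_ge hA'.1 hAl i))
  have := hdiag.mul_mul_conjTranspose_same U
  rwa [← Matrix.star_eq_conjTranspose] at this

/-- A Hermitian matrix whose eigenvalues are bounded in absolute value has bounded operator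
norm. -/
lemma hermitian_opNorm_le {D : Matrix (Fin d) (Fin d) ℝ} (hD : D.IsHermitian) {c : ℝ}
    (hc : 0 ≤ c) (h : ∀ i, |hD.eigenvalues i| ≤ c) : opNorm D ≤ c := by
  apply opNorm_le _ hc
  intro v
  set b := hD.eigenvectorBasis with hb
  set T := Matrix.toEuclideanCLM (𝕜 := ℝ) D with hT
  have hsa : IsSelfAdjoint T := by
    rw [hT]
    show star _ = _
    rw [← map_star]
    congr 1
  have hTb : ∀ i, T (b i) = hD.eigenvalues i • b i := by
    intro i
    apply PiLp.ext
    intro j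
    have := congrFun (hD.mulVec_eigenvectorBasis i) j
    simpa [hT, clm_apply] using this
  have hrepr : ∀ i, b.repr (T v) i = hD.eigenvalues i * b.repr v i := by
    intro i
    rw [b.repr_apply_apply, b.repr_apply_apply, ← ContinuousLinearMap.adjoint_inner_left,
      ← ContinuousLinearMap.star_eq_adjoint, hsa.star_eq, hTb i, real_inner_smul_left]
  have h2 : ‖T v‖ ^ 2 ≤ (c * ‖v‖) ^ 2 := by
    rw [← b.repr.norm_map (T v), ← b.repr.norm_map v, norm_sq_eq_dot, mul_pow, norm_sq_eq_dot,
      dotProduct, dotProduct, Finset.mul_sum]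
    apply Finset.sum_le_sum
    intro i _
    rw [hrepr i]
    have h3 := h i
    have h4 : hD.eigenvalues i ^ 2 ≤ c ^ 2 := by
      rw [← sq_abs]
      exact pow_le_pow_left₀ (abs_nonneg _) h3 2
    nlinarith [sq_nonneg (b.repr v i)]
  have := Real.sqrt_le_sqrt h2
  rwa [Real.sqrt_sq (norm_nonneg _), Real.sqrt_sq (by positivity)] at this

/-- Eigenvalue bound for solutions of the Sylvester equation. -/
lemma eigen_bound {X Y D : Matrix (Fin d) (Fin d) ℝ} {μ : ℝ} (hμ : 0 < μ)
    (hX : (X - μ • 1).PosSemidef) (hY : (Y - μ • 1).PosSemidef)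
    (hD : D.IsHermitian) (i : Fin d) :
    2 * μ * |hD.eigenvalues i| ≤ opNorm (X * D + D * Y) := by
  set x := hD.eigenvectorBasis i with hx
  set v := ⇑(hD.eigenvectorBasis i) with hv
  set δ := hD.eigenvalues i with hδ
  have hunit : v ⬝ᵥ v = 1 := by
    rw [← norm_sq_eq_dot, hD.eigenvectorBasis.orthonormal.1 i, one_pow]
  have hxnorm : ‖x‖ = 1 := hD.eigenvectorBasis.orthonormal.1 i
  have hDv : D *ᵥ v = δ • v := hD.mulVec_eigenvectorBasis i
  have hqX : μ ≤ v ⬝ᵥ (X *ᵥ v) := by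
    have h2 := hX.dotProduct_mulVec_nonneg v
    rw [star_trivial, Matrix.sub_mulVec, Matrix.smul_mulVec, Matrix.one_mulVec,
      dotProduct_sub, dotProduct_smul, smul_eq_mul, hunit, mul_one, sub_nonneg] at h2
    exact h2
  have hqY : μ ≤ v ⬝ᵥ (Y *ᵥ v) := by
    have h2 := hY.dotProduct_mulVec_nonneg v
    rw [star_trivial, Matrix.sub_mulVec, Matrix.smul_mulVec, Matrix.one_mulVec,
      dotProduct_sub, dotProduct_smul, smul_eq_mul, hunit, mul_one, sub_nonneg] at h2
    exact h2
  have hs : v ⬝ᵥ ((X * D + D * Y) *ᵥ v) = δ * (v ⬝ᵥ (X *ᵥ v) + v ⬝ᵥ (Y *ᵥ v)) := by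
    rw [Matrix.add_mulVec, dotProduct_add, ← Matrix.mulVec_mulVec, ← Matrix.mulVec_mulVec,
      hDv, Matrix.mulVec_smul, dotProduct_smul, dot_symm_mulVec hD, hDv, smul_dotProduct,
      smul_eq_mul, smul_eq_mul, mul_add]
  have habs : |v ⬝ᵥ ((X * D + D * Y) *ᵥ v)| ≤ opNorm (X * D + D * Y) := by
    have h1 : v ⬝ᵥ ((X * D + D * Y) *ᵥ v)
        = (inner ℝ x (Matrix.toEuclideanCLM (𝕜 := ℝ) (X * D + D * Y) x) : ℝ) := by
      rw [inner_eq_dot, clm_apply]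
    rw [h1]
    calc |(inner ℝ x (Matrix.toEuclideanCLM (𝕜 := ℝ) (X * D + D * Y) x) : ℝ)|
        ≤ ‖x‖ * ‖Matrix.toEuclideanCLM (𝕜 := ℝ) (X * D + D * Y) x‖ :=
          abs_real_inner_le_norm _ _
      _ ≤ ‖x‖ * (opNorm (X * D + D * Y) * ‖x‖) := by
          gcongr
          exact (Matrix.toEuclideanCLM (𝕜 := ℝ) _).le_opNorm x
      _ = opNorm (X * D + D * Y) := by rw [hxnorm]; ring
  rw [hs, abs_mul, abs_of_pos (by linarith : (0:ℝ) < v ⬝ᵥ (X *ᵥ v) + v ⬝ᵥ (Y *ᵥ v))] at habs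
  nlinarith [abs_nonneg δ]

end Stmt8Aux

open Stmt8Aux in
/-- Lipschitzness of the inverse matrix square root: if `A, B ⪰ λ I` (`λ > 0`) then
`‖A^{-1/2} - B^{-1/2}‖ ≤ λ^{-3/2} ‖A - B‖`. -/
theorem stmt8 {d : ℕ} (lam : ℝ) (hlam : 0 < lam)
    (A B : Matrix (Fin d) (Fin d) ℝ) (hA : A.PosDef) (hB : B.PosDef)
    (hAl : (A - lam • 1).PosSemidef) (hBl : (B - lam • 1).PosSemidef) :
    opNorm ((hA.posSemidef.sqrt)⁻¹ - (hB.posSemidef.sqrt)⁻¹)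
      ≤ lam ^ (-(3 : ℝ) / 2) * opNorm (A - B) := by
  set μ := Real.sqrt lam with hμdef
  have hμ : 0 < μ := Real.sqrt_pos.mpr hlam
  set X := hA.posSemidef.sqrt with hXdef
  set Y := hB.posSemidef.sqrt with hYdef
  have hXY : X * X = A := psd_sqrt_mul_self hA.posSemidef
  have hYY : Y * Y = B := psd_sqrt_mul_self hB.posSemidef
  have hXinv : X⁻¹ * X = 1 := Matrix.nonsing_inv_mul _ (sqrt_det_isUnit hA)
  have hXinv' : X * X⁻¹ = 1 := Matrix.mul_nonsing_inv _ (sqrt_det_isUnit hA)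
  have hYinv : Y⁻¹ * Y = 1 := Matrix.nonsing_inv_mul _ (sqrt_det_isUnit hB)
  have hYinv' : Y * Y⁻¹ = 1 := Matrix.mul_nonsing_inv _ (sqrt_det_isUnit hB)
  set T := X⁻¹ - Y⁻¹ with hT
  have hTh : T.IsHermitian :=
    ((psd_posSemidef_sqrt hA.posSemidef).inv.1).sub ((psd_posSemidef_sqrt hB.posSemidef).inv.1)
  -- the Sylvester identity
  have hSyl : X * T + T * Y = X⁻¹ * (B - A) * Y⁻¹ := by
    have e1 : X⁻¹ * (Y * Y) * Y⁻¹ = X⁻¹ * Y := by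
      rw [Matrix.mul_assoc X⁻¹ (Y * Y) Y⁻¹, Matrix.mul_assoc Y Y Y⁻¹, hYinv', Matrix.mul_one]
    have e2 : X⁻¹ * (X * X) * Y⁻¹ = X * Y⁻¹ := by
      rw [← Matrix.mul_assoc X⁻¹ X X, hXinv, Matrix.one_mul]
    have hL : X * T + T * Y = X⁻¹ * Y - X * Y⁻¹ := by
      rw [hT, Matrix.mul_sub, Matrix.sub_mul, hXinv', hYinv]
      abel
    rw [hL, ← hXY, ← hYY, Matrix.mul_sub, Matrix.sub_mul, e1, e2]
  -- norm bounds
  have h1 : opNorm X⁻¹ ≤ μ⁻¹ := opNorm_inv_sqrt_le hA hlam hAl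
  have h2 : opNorm Y⁻¹ ≤ μ⁻¹ := opNorm_inv_sqrt_le hB hlam hBl
  have hXl : (X - μ • 1).PosSemidef := sqrt_loewner hA hAl
  have hYl : (Y - μ • 1).PosSemidef := sqrt_loewner hB hBl
  have hz : 0 ≤ opNorm (A - B) := opNorm_nonneg _
  have hS : opNorm (X * T + T * Y) ≤ μ⁻¹ * opNorm (A - B) * μ⁻¹ := by
    rw [hSyl]
    calc opNorm (X⁻¹ * (B - A) * Y⁻¹)
        ≤ opNorm (X⁻¹ * (B - A)) * opNorm Y⁻¹ := opNorm_mul_le _ _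
      _ ≤ opNorm X⁻¹ * opNorm (B - A) * opNorm Y⁻¹ := by
          gcongr
          · exact opNorm_nonneg _
          · exact opNorm_mul_le _ _
      _ = opNorm X⁻¹ * opNorm (A - B) * opNorm Y⁻¹ := by rw [opNorm_sub_rev B A]
      _ ≤ μ⁻¹ * opNorm (A - B) * μ⁻¹ := by
          gcongr
          · exact opNorm_nonneg _
  have hTbound : opNorm T ≤ μ⁻¹ * opNorm (A - B) * μ⁻¹ / (2 * μ) := by
    apply hermitian_opNorm_le hTh (by positivity)
    intro i
    have := eigen_bound hμ hXl hYl hTh i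
    rw [le_div_iff₀ (by positivity)]
    calc |hTh.eigenvalues i| * (2 * μ) = 2 * μ * |hTh.eigenvalues i| := by ring
      _ ≤ opNorm (X * T + T * Y) := this
      _ ≤ μ⁻¹ * opNorm (A - B) * μ⁻¹ := hS
  have hpow : lam ^ (-(3 : ℝ) / 2) = μ⁻¹ ^ 3 := by
    have e : μ⁻¹ = lam ^ (-(1/2) : ℝ) := by
      rw [hμdef, Real.sqrt_eq_rpow, ← Real.rpow_neg hlam.le]
    rw [e, ← Real.rpow_natCast (lam ^ (-(1/2) : ℝ)) 3, ← Real.rpow_mul hlam.le]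
    norm_num
  calc opNorm T ≤ μ⁻¹ * opNorm (A - B) * μ⁻¹ / (2 * μ) := hTbound
    _ ≤ μ⁻¹ ^ 3 * opNorm (A - B) := by
        rw [div_le_iff₀ (by positivity)]
        have hμ3 : μ⁻¹ ^ 3 * μ = μ⁻¹ * μ⁻¹ := by
          field_simp
        nlinarith [mul_pos hμ hμ, sq_nonneg μ⁻¹]
    _ = lam ^ (-(3 : ℝ) / 2) * opNorm (A - B) := by rw [hpow]
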